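/- arXiv:2601.13483 — 8 statements merged into one kernel-verified Lean document; each statement's English description precedes it below -/
import Mathlib

section
/- For every i ∈ [n] and every j ∈ [u_i+1, v_i], the tuple a_{i,j} belongs to 𝓛; that is, u_t ≤ (a_{i,j})_t ≤ v_t for every t ∈ [n], and the entries of a_{i,j} are strictly increasing. -/
namespace LadderPaper

/-- The tuple `a_{i,j}`: entry `t` is `u t` for `t < i` and `max (j + (t - i)) (u t)` for
`t ≥ i` (indices `t ∈ [1,n]`; entries outside `[1,n]` are set to `0`). -/
def atuple (u : ℕ → ℤ) (n i : ℕ) (j : ℤ) : ℕ → ℤ := fun t =>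
  if 1 ≤ t ∧ t ≤ n then
    (if t < i then u t else max (j + ((t : ℤ) - (i : ℤ))) (u t))
  else 0

/-- The tuple `b_{i,j}`: like `a_{i,j}` but with `i`-th entry `j - 1`. -/
def btuple (u : ℕ → ℤ) (n i : ℕ) (j : ℤ) : ℕ → ℤ := fun t =>
  if 1 ≤ t ∧ t ≤ n then
    (if t < i then u t
     else if t = i then j - 1
     else max (j + ((t : ℤ) - (i : ℤ))) (u t))
  else 0

/-- The tuple `(u_1, …, u_n)`. -/
def utuple (u : ℕ → ℤ) (n : ℕ) : ℕ → ℤ := fun t =>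
  if 1 ≤ t ∧ t ≤ n then u t else 0

/-- The lattice `𝓛` of tuples `c` with `u t ≤ c t ≤ v t` for `t ∈ [1,n]`, strictly
increasing entries, and (normalization) `c t = 0` outside `[1,n]`.  It carries the
componentwise (induced product) order. -/
def ladderL (n : ℕ) (u v : ℕ → ℤ) : Set (ℕ → ℤ) :=
  {c | (∀ t, 1 ≤ t → t ≤ n → u t ≤ c t ∧ c t ≤ v t) ∧
       (∀ t, 1 ≤ t → t + 1 ≤ n → c t < c (t + 1)) ∧
       (∀ t, t = 0 ∨ n < t → c t = 0)}

/-- The set `P_𝓛 = { a_{i,j} : i ∈ [n], j ∈ [u_i + 1, v_i] }`. -/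
def PL (n : ℕ) (u v : ℕ → ℤ) : Set (ℕ → ℤ) :=
  {x | ∃ i : ℕ, ∃ j : ℤ, 1 ≤ i ∧ i ≤ n ∧ u i + 1 ≤ j ∧ j ≤ v i ∧ x = atuple u n i j}

/-- The product poset `𝓛 × [r]`. -/
def ladderLr (n : ℕ) (u v : ℕ → ℤ) (r : ℤ) : Set ((ℕ → ℤ) × ℤ) :=
  {p | p.1 ∈ ladderL n u v ∧ 1 ≤ p.2 ∧ p.2 ≤ r}

/-- The set `P_{𝓛×[r]} = { (a_{i,j}, 1) } ∪ { ((u_1,…,u_n), k) : k ∈ [2,r] }`. -/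
def PLr (n : ℕ) (u v : ℕ → ℤ) (r : ℤ) : Set ((ℕ → ℤ) × ℤ) :=
  {p | (p.1 ∈ PL n u v ∧ p.2 = 1) ∨ (p.1 = utuple u n ∧ 2 ≤ p.2 ∧ p.2 ≤ r)}

/-- `ε_i > 1`, with the convention `ε_n > 1` (i.e. `i = n` or `u_{i+1} - u_i > 1`). -/
def epsGt1 (u : ℕ → ℤ) (n i : ℕ) : Prop := i = n ∨ 1 < u (i + 1) - u i

/-- `θ_{i-1} > 1`, with the convention `θ_0 > 1` (i.e. `i = 1` or `v_i - v_{i-1} > 1`). -/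
def thetaGt1 (v : ℕ → ℤ) (i : ℕ) : Prop := i = 1 ∨ 1 < v i - v (i - 1)

/-- Membership in `C = { i ∈ [n-1] : v_i < u_{i+1} } ∪ { n }`. -/
def inC (n : ℕ) (u v : ℕ → ℤ) (i : ℕ) : Prop :=
  (1 ≤ i ∧ i + 1 ≤ n ∧ v i < u (i + 1)) ∨ i = n

/-- The set `C = { i ∈ [n-1] : v_i < u_{i+1} } ∪ { n }`. -/
def Cset (n : ℕ) (u v : ℕ → ℤ) : Set ℕ :=
  {i | 1 ≤ i ∧ i + 1 ≤ n ∧ v i < u (i + 1)} ∪ {n}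

/-- `[p,q]` is one of the blocks `[p_s, q_s]` determined by `C`: `q ∈ C`,
no element of `C` lies in `[p, q-1]`, and either `p = 1` or `p - 1 ∈ C`. -/
def IsBlock (n : ℕ) (u v : ℕ → ℤ) (p q : ℕ) : Prop :=
  1 ≤ p ∧ p ≤ q ∧ q ≤ n ∧ inC n u v q ∧
    (∀ j, p ≤ j → j < q → ¬ inC n u v j) ∧ (p = 1 ∨ inC n u v (p - 1))

/-- `i0 = min { i ∈ [p,q] : ε_i > 1 }` (with the convention `ε_n > 1`). -/
def IsBlockMin (n : ℕ) (u : ℕ → ℤ) (p q i0 : ℕ) : Prop :=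
  p ≤ i0 ∧ i0 ≤ q ∧ epsGt1 u n i0 ∧ ∀ j, p ≤ j → j < i0 → ¬ epsGt1 u n j

/-- The comparability graph of a poset: two distinct elements are adjacent
iff they are comparable. -/
def compGraph (α : Type*) [Preorder α] : SimpleGraph α where
  Adj x y := x ≠ y ∧ (x ≤ y ∨ y ≤ x)
  symm := ⟨fun x y h => ⟨Ne.symm h.1, Or.symm h.2⟩⟩
  loopless := ⟨fun x h => h.1 rfl⟩

/-- A poset is pure if all of its maximal chains have the same cardinality
(equivalently, the same length). -/
def IsPure (α : Type*) [Preorder α] : Prop :=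
  ∀ A B : Set α, IsMaxChain (· ≤ ·) A → IsMaxChain (· ≤ ·) B → A.ncard = B.ncard

theorem stmt0
    (n m : ℕ) (u v : ℕ → ℤ)
    (hn : 1 ≤ n) (hnm : n < m)
    (hu1 : u 1 = 1)
    (humono : ∀ i, 1 ≤ i → i + 1 ≤ n → u i < u (i + 1))
    (hum : u n < (m : ℤ))
    (hv1 : 1 < v 1)
    (hvmono : ∀ i, 1 ≤ i → i + 1 ≤ n → v i < v (i + 1))
    (hvn : v n = (m : ℤ))
    (huv : ∀ i, 1 ≤ i → i ≤ n → u i < v i)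
    (hstep : ∀ i, 1 ≤ i → i + 1 ≤ n → u (i + 1) ≤ v i + 1) :
    ∀ i : ℕ, ∀ j : ℤ, 1 ≤ i → i ≤ n → u i + 1 ≤ j → j ≤ v i →
      atuple u n i j ∈ ladderL n u v := by
  intro i j hi1 hin hj1 hj2
  have hvstep : ∀ t, i ≤ t → t ≤ n → j + ((t : ℤ) - (i : ℤ)) ≤ v t := by
    intro t
    induction t with
    | zero => intro h1 _; omega
    | succ t ih =>
      intro h1 h2
      rcases Nat.lt_or_ge i (t + 1) with h | h
      · have h3 := ih (by omega) (by omega)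
        have hv := hvmono t (by omega) h2
        push_cast
        push_cast at h3
        omega
      · have hieq : i = t + 1 := by omega
        subst hieq
        push_cast
        push_cast at hj2
        omega
  refine ⟨?_, ?_, ?_⟩
  · intro t h1 h2
    unfold atuple
    simp only [h1, h2, and_self, if_true]
    split_ifs with h
    · exact ⟨le_refl _, le_of_lt (huv t h1 h2)⟩
    · push_neg at h
      refine ⟨le_max_right _ _, max_le (hvstep t h h2) (le_of_lt (huv t h1 h2))⟩
  · intro t h1 h2
    have ht1 : t ≤ n := by omega
    have h1' : 1 ≤ t + 1 := by omega
    unfold atuple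
    simp only [h1, ht1, h1', h2, and_self, if_true]
    rcases Nat.lt_or_ge (t + 1) i with h | h
    · have ht : t < i := by omega
      simp only [ht, h, if_true]
      exact humono t h1 h2
    rcases Nat.lt_or_ge t i with ht | ht
    · -- t < i ≤ t + 1, so i = t + 1
      have hieq : i = t + 1 := by omega
      simp only [ht, if_true, if_neg (by omega : ¬ t + 1 < i)]
      calc u t < u (t + 1) := humono t h1 h2
        _ ≤ max (j + ((t + 1 : ℕ) : ℤ) - (i : ℤ)) (u (t + 1)) := by
            rw [max_comm]; exact le_max_left _ _
        _ = max ((j + (((t + 1 : ℕ) : ℤ) - (i : ℤ)))) (u (t + 1)) := by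
            congr 1; ring
    · simp only [if_neg (by omega : ¬ t < i), if_neg (by omega : ¬ t + 1 < i)]
      apply max_lt_max
      · push_cast; omega
      · exact humono t h1 h2
  · intro t ht
    unfold atuple
    rw [if_neg]
    omega

end LadderPaper
end

section
/- For i, k ∈ [n], j ∈ [u_i+1, v_i] and l ∈ [u_k+1, v_k], one has a_{k,l} ≤ a_{i,j} in 𝓛 if and only if k ≥ i and l − j ≤ k − i. -/
namespace LadderPaper

theorem stmt1
    (n m : ℕ) (u v : ℕ → ℤ)
    (hn : 1 ≤ n) (hnm : n < m)
    (hu1 : u 1 = 1)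
    (humono : ∀ i, 1 ≤ i → i + 1 ≤ n → u i < u (i + 1))
    (hum : u n < (m : ℤ))
    (hv1 : 1 < v 1)
    (hvmono : ∀ i, 1 ≤ i → i + 1 ≤ n → v i < v (i + 1))
    (hvn : v n = (m : ℤ))
    (huv : ∀ i, 1 ≤ i → i ≤ n → u i < v i)
    (hstep : ∀ i, 1 ≤ i → i + 1 ≤ n → u (i + 1) ≤ v i + 1) :
    ∀ i k : ℕ, ∀ j l : ℤ, 1 ≤ i → i ≤ n → 1 ≤ k → k ≤ n →
      u i + 1 ≤ j → j ≤ v i → u k + 1 ≤ l → l ≤ v k →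
      (atuple u n k l ≤ atuple u n i j ↔ (i ≤ k ∧ l - j ≤ (k : ℤ) - (i : ℤ))) := by
  intro i k j l hi1 hin hk1 hkn hj1 hj2 hl1 hl2
  constructor
  · intro h
    have hk := h k
    simp only [atuple, if_pos (And.intro hk1 hkn), lt_irrefl, if_false] at hk
    by_cases hik : k < i
    · rw [if_pos hik] at hk
      exfalso
      have : l ≤ u k := by
        have := le_trans (le_max_left (l + ((k : ℤ) - (k : ℤ))) (u k)) hk
        linarith
      linarith
    · push_neg at hik
      rw [if_neg (not_lt.mpr hik)] at hk
      refine ⟨hik, ?_⟩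
      have hl : l ≤ max (j + ((k : ℤ) - (i : ℤ))) (u k) := by
        have := le_trans (le_max_left (l + ((k : ℤ) - (k : ℤ))) (u k)) hk
        linarith
      rcases le_max_iff.mp hl with h1 | h1
      · linarith
      · linarith
  · rintro ⟨hik, hlj⟩
    intro t
    simp only [atuple]
    by_cases ht : 1 ≤ t ∧ t ≤ n
    · rw [if_pos ht, if_pos ht]
      by_cases hti : t < i
      · rw [if_pos hti, if_pos (lt_of_lt_of_le hti hik)]
      · push_neg at hti
        rw [if_neg (not_lt.mpr hti)]
        by_cases htk : t < k
        · rw [if_pos htk]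
          exact le_max_right _ _
        · push_neg at htk
          rw [if_neg (not_lt.mpr htk)]
          apply max_le
          · apply le_max_of_le_left
            have : (i : ℤ) ≤ (k : ℤ) := by exact_mod_cast hik
            linarith
          · exact le_max_right _ _
    · rw [if_neg ht, if_neg ht]

end LadderPaper
end

section
/- Fix i ∈ [n] and j ∈ [u_i+1, v_i], and let b_{i,j} be the tuple in ℤ^n whose t-th entry is u_t for t < i, is j−1 for t = i, and is max{ j + (t−i), u_t } for t > i. Then b_{i,j} ∈ 𝓛, b_{i,j} < a_{i,j}, and every c ∈ 𝓛 with c < a_{i,j} satisfies c ≤ b_{i,j}. Consequently, a_{i,j} covers exactly one element of 𝓛, namely b_{i,j}. -/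
namespace LadderPaper

lemma stepGE_aux (n : ℕ) (w : ℕ → ℤ)
    (hmono : ∀ i, 1 ≤ i → i + 1 ≤ n → w i < w (i + 1)) :
    ∀ s k : ℕ, 1 ≤ s → s + k ≤ n → w s + (k : ℤ) ≤ w (s + k) := by
  intro s k hs
  induction k with
  | zero => simp
  | succ k ih =>
    intro h
    have h1 := hmono (s + k) (by omega) (by omega)
    have h2 := ih (by omega)
    have he : s + (k + 1) = s + k + 1 := rfl
    rw [he]
    push_cast
    omega

lemma stepGE (n : ℕ) (w : ℕ → ℤ)
    (hmono : ∀ i, 1 ≤ i → i + 1 ≤ n → w i < w (i + 1)) :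
    ∀ s t : ℕ, 1 ≤ s → s ≤ t → t ≤ n → w s + ((t : ℤ) - (s : ℤ)) ≤ w t := by
  intro s t hs hst htn
  have := stepGE_aux n w hmono s (t - s) hs (by omega)
  have hts : s + (t - s) = t := by omega
  rw [hts] at this
  have hcast : ((t - s : ℕ) : ℤ) = (t : ℤ) - (s : ℤ) := by omega
  omega

theorem stmt2
    (n m : ℕ) (u v : ℕ → ℤ)
    (hn : 1 ≤ n) (hnm : n < m)
    (hu1 : u 1 = 1)
    (humono : ∀ i, 1 ≤ i → i + 1 ≤ n → u i < u (i + 1))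
    (hum : u n < (m : ℤ))
    (hv1 : 1 < v 1)
    (hvmono : ∀ i, 1 ≤ i → i + 1 ≤ n → v i < v (i + 1))
    (hvn : v n = (m : ℤ))
    (huv : ∀ i, 1 ≤ i → i ≤ n → u i < v i)
    (hstep : ∀ i, 1 ≤ i → i + 1 ≤ n → u (i + 1) ≤ v i + 1)
    (i : ℕ) (j : ℤ) (hi1 : 1 ≤ i) (hin : i ≤ n) (hj1 : u i + 1 ≤ j) (hj2 : j ≤ v i) :
    btuple u n i j ∈ ladderL n u v ∧
    btuple u n i j < atuple u n i j ∧
    (∀ c ∈ ladderL n u v, c < atuple u n i j → c ≤ btuple u n i j) ∧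
    (∀ x : ↥(ladderL n u v), (x : ℕ → ℤ) = atuple u n i j →
      ∀ y : ↥(ladderL n u v), (y ⋖ x ↔ (y : ℕ → ℤ) = btuple u n i j)) := by
  have ustep := stepGE n u humono
  have vstep := stepGE n v hvmono
  -- part 1: btuple ∈ ladderL
  have hbmem : btuple u n i j ∈ ladderL n u v := by
    refine ⟨?_, ?_, ?_⟩
    · intro t ht1 htn
      simp only [btuple, if_pos (And.intro ht1 htn)]
      rcases lt_trichotomy t i with h | h | h
      · rw [if_pos h]
        exact ⟨le_refl _, le_of_lt (huv t ht1 htn)⟩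
      · subst h
        rw [if_neg (lt_irrefl t), if_pos rfl]
        constructor <;> omega
      · rw [if_neg (by omega), if_neg (by omega)]
        have h1 := vstep i t hi1 (by omega) htn
        have h2 := huv t ht1 htn
        constructor
        · exact le_max_right _ _
        · apply max_le <;> omega
    · intro t ht1 htn
      simp only [btuple, if_pos (And.intro ht1 (by omega : t ≤ n)),
        if_pos (And.intro (by omega : 1 ≤ t + 1) htn)]
      rcases lt_trichotomy (t + 1) i with h | h | h
      · rw [if_pos (by omega), if_pos h]
        exact humono t ht1 (by omega)
      · have hti : t < i := by omega
        rw [if_pos hti, if_neg (by omega), if_pos h]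
        have := ustep t i ht1 (by omega) hin
        omega
      · rcases lt_trichotomy t i with h' | h' | h'
        · omega
        · subst h'
          rw [if_neg (lt_irrefl t), if_pos rfl, if_neg (by omega), if_neg (by omega)]
          have : j - 1 < j + ((t : ℤ) + 1 - (t : ℤ)) := by omega
          exact lt_max_of_lt_left this
        · rw [if_neg (by omega), if_neg (by omega), if_neg (by omega), if_neg (by omega)]
          have h1 := humono t ht1 htn
          have h2 : j + ((t : ℤ) - (i : ℤ)) < j + (((t : ℤ) + 1) - (i : ℤ)) := by omega
          push_cast
          exact max_lt_max h2 h1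
    · intro t ht
      simp only [btuple]
      rw [if_neg (by omega)]
  -- pointwise facts about atuple
  have hale : btuple u n i j ≤ atuple u n i j := by
    intro t
    simp only [btuple, atuple]
    by_cases hrng : 1 ≤ t ∧ t ≤ n
    · rw [if_pos hrng, if_pos hrng]
      rcases lt_trichotomy t i with h | h | h
      · rw [if_pos h, if_pos h]
      · subst h
        rw [if_neg (lt_irrefl t), if_pos rfl, if_neg (lt_irrefl t)]
        have : j - 1 ≤ j + ((t : ℤ) - (t : ℤ)) := by omega
        exact le_trans this (le_max_left _ _)
      · rw [if_neg (by omega), if_neg (by omega), if_neg (by omega)]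
    · rw [if_neg hrng, if_neg hrng]
  have hai : atuple u n i j i = j := by
    simp only [atuple, if_pos (And.intro hi1 hin), if_neg (lt_irrefl i)]
    have : j + ((i : ℤ) - (i : ℤ)) = j := by omega
    rw [this]
    omega
  have hbi : btuple u n i j i = j - 1 := by
    simp [btuple, hi1, hin]
  have hblt : btuple u n i j < atuple u n i j := by
    rw [Pi.lt_def]
    exact ⟨hale, i, by rw [hai, hbi]; omega⟩
  -- part 3
  have hmain : ∀ c ∈ ladderL n u v, c < atuple u n i j → c ≤ btuple u n i j := by
    intro c hc hlt
    obtain ⟨hcb, hcmono, hczero⟩ := hc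
    have hcle : c ≤ atuple u n i j := le_of_lt hlt
    have hcne : c ≠ atuple u n i j := ne_of_lt hlt
    -- key: c i < j
    have hci : c i < j := by
      by_contra hcon
      push_neg at hcon
      have hcij : c i = j := le_antisymm (by have := hcle i; rw [hai] at this; exact this) hcon
      apply hcne
      funext t
      by_cases hrng : 1 ≤ t ∧ t ≤ n
      · rcases lt_or_ge t i with h | h
        · have hat : atuple u n i j t = u t := by
            simp only [atuple, if_pos hrng, if_pos h]
          have h1 := (hcb t hrng.1 hrng.2).1
          have h2 := hcle t
          rw [hat] at h2 ⊢
          exact le_antisymm h2 h1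
        · -- t ≥ i : show c t ≥ j + (t - i)
          have key : ∀ k : ℕ, i + k ≤ n → j + (k : ℤ) ≤ c (i + k) := by
            intro k
            induction k with
            | zero => intro _; simp [hcij]
            | succ k ih =>
              intro hk
              have h1 := hcmono (i + k) (by omega) (by omega)
              have h2 := ih (by omega)
              push_cast
              have : i + (k + 1) = i + k + 1 := by omega
              rw [this]
              omega
          have hk := key (t - i) (by omega)
          have ht2 : i + (t - i) = t := by omega
          rw [ht2] at hk
          have hcast : ((t - i : ℕ) : ℤ) = (t : ℤ) - (i : ℤ) := by omega
          rw [hcast] at hk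
          have hat : atuple u n i j t = max (j + ((t : ℤ) - (i : ℤ))) (u t) := by
            simp only [atuple, if_pos hrng, if_neg (by omega : ¬ t < i)]
          have h1 := (hcb t hrng.1 hrng.2).1
          have h2 := hcle t
          rw [hat] at h2 ⊢
          exact le_antisymm h2 (max_le hk h1)
      · have h1 := hczero t (by omega)
        simp only [atuple, if_neg hrng]
        exact h1
    -- now show c ≤ btuple
    intro t
    by_cases hrng : 1 ≤ t ∧ t ≤ n
    · rcases lt_trichotomy t i with h | h | h
      · have hat : atuple u n i j t = u t := by
          simp only [atuple, if_pos hrng, if_pos h]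
        have hbt : btuple u n i j t = u t := by
          simp only [btuple, if_pos hrng, if_pos h]
        have h2 := hcle t
        rw [hat] at h2
        rw [hbt]
        exact h2
      · rw [h, hbi]
        exact Int.le_sub_one_of_lt hci
      · have hat : atuple u n i j t = max (j + ((t : ℤ) - (i : ℤ))) (u t) := by
          simp only [atuple, if_pos hrng, if_neg (by omega : ¬ t < i)]
        have hbt : btuple u n i j t = max (j + ((t : ℤ) - (i : ℤ))) (u t) := by
          simp only [btuple, if_pos hrng, if_neg (by omega : ¬ t < i),
            if_neg (by omega : ¬ t = i)]
        have h2 := hcle t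
        rw [hat] at h2
        rw [hbt]
        exact h2
    · have h1 := hczero t (by omega)
      have h2 : btuple u n i j t = 0 := by simp only [btuple, if_neg hrng]
      rw [h1, h2]
  refine ⟨hbmem, hblt, hmain, ?_⟩
  intro x hx y
  have hxb : (⟨btuple u n i j, hbmem⟩ : ↥(ladderL n u v)) < x := by
    rw [← Subtype.coe_lt_coe, hx]
    exact hblt
  constructor
  · intro hcov
    have hylt : (y : ℕ → ℤ) < atuple u n i j := by
      rw [← hx, Subtype.coe_lt_coe]
      exact hcov.lt
    have hyle := hmain y y.2 hylt
    by_contra hne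
    have hylt' : y < (⟨btuple u n i j, hbmem⟩ : ↥(ladderL n u v)) := by
      rw [← Subtype.coe_lt_coe]
      exact lt_of_le_of_ne hyle hne
    exact hcov.2 hylt' hxb
  · intro hy
    constructor
    · rw [← Subtype.coe_lt_coe, hy, hx]
      exact hblt
    · intro z hz1 hz2
      have h1 : btuple u n i j < (z : ℕ → ℤ) := by
        rw [← hy]
        exact Subtype.coe_lt_coe.mpr hz1
      have h2 : (z : ℕ → ℤ) < atuple u n i j := by
        rw [← hx]
        exact Subtype.coe_lt_coe.mpr hz2
      have := hmain z z.2 h2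
      exact absurd (lt_of_lt_of_le h1 this) (lt_irrefl _)


end LadderPaper
end

section
/- The set of join-irreducible elements of the lattice 𝓛 is exactly P_𝓛 = { a_{i,j} : i ∈ [n], j ∈ [u_i+1, v_i] }. -/
namespace LadderPaper

/-! ### Auxiliary lemmas for `stmt3` -/

/-- Coordinate `i` of `x` is "removable": decreasing it by 1 stays in `𝓛`. -/
def Rem (n : ℕ) (u : ℕ → ℤ) (x : ℕ → ℤ) (i : ℕ) : Prop :=
  1 ≤ i ∧ i ≤ n ∧ u i ≤ x i - 1 ∧ x (i - 1) < x i - 1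

/-- `x` with coordinate `i` decreased by 1. -/
def dec (x : ℕ → ℤ) (i : ℕ) : ℕ → ℤ := fun t => if t = i then x i - 1 else x t

lemma dec_apply_self (x : ℕ → ℤ) (i : ℕ) : dec x i i = x i - 1 := by simp [dec]

lemma dec_apply_ne (x : ℕ → ℤ) {i t : ℕ} (h : t ≠ i) : dec x i t = x t := by simp [dec, h]

lemma dec_mem {n : ℕ} {u v : ℕ → ℤ} {x : ℕ → ℤ} {i : ℕ}
    (hx : x ∈ ladderL n u v) (h : Rem n u x i) : dec x i ∈ ladderL n u v := by
  obtain ⟨hi1, hin, hui, hprev⟩ := h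
  obtain ⟨hb, hm, h0⟩ := hx
  refine ⟨?_, ?_, ?_⟩
  · intro t ht1 htn
    by_cases ht : t = i
    · subst ht
      have h2 := (hb t ht1 htn).2
      rw [dec_apply_self]
      exact ⟨hui, by linarith⟩
    · rw [dec_apply_ne x ht]; exact hb t ht1 htn
  · intro t ht1 htn
    by_cases h1 : t = i
    · subst h1
      rw [dec_apply_self, dec_apply_ne x (by omega : t + 1 ≠ t)]
      have := hm t ht1 htn
      linarith
    · by_cases h2 : t + 1 = i
      · rw [dec_apply_ne x h1, h2, dec_apply_self]
        have ht : i - 1 = t := by omega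
        rw [← ht]; exact hprev
      · rw [dec_apply_ne x h1, dec_apply_ne x h2]; exact hm t ht1 htn
  · intro t ht
    have hne : t ≠ i := by omega
    rw [dec_apply_ne x hne]; exact h0 t ht

lemma dec_le {x : ℕ → ℤ} {i : ℕ} : dec x i ≤ x := by
  intro t
  by_cases ht : t = i
  · subst ht; rw [dec_apply_self]; linarith
  · rw [dec_apply_ne x ht]

lemma dec_lt {x : ℕ → ℤ} {i : ℕ} : dec x i < x := by
  refine lt_of_le_of_ne dec_le (fun hc => ?_)
  have := congrFun hc i
  rw [dec_apply_self] at this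
  omega

/-- If coordinate `i` is removable then `dec x i` is covered by `x` in the subtype. -/
lemma dec_covby {n : ℕ} {u v : ℕ → ℤ} {x : ↥(ladderL n u v)} {i : ℕ}
    (hrem : Rem n u x.val i) :
    (⟨dec x.val i, dec_mem x.2 hrem⟩ : ↥(ladderL n u v)) ⋖ x := by
  constructor
  · exact Subtype.coe_lt_coe.mp dec_lt
  · rintro c hyc hcx
    have h1 : dec x.val i < c.val := Subtype.coe_lt_coe.mpr hyc
    have h2 : c.val < x.val := Subtype.coe_lt_coe.mpr hcx
    have hle1 := h1.le
    have hle2 := h2.le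
    have hcx' : c.val ≠ x.val := ne_of_lt h2
    have hyc' : dec x.val i ≠ c.val := ne_of_lt h1
    have hoff : ∀ t, t ≠ i → c.val t = x.val t := by
      intro t ht
      have := hle1 t
      rw [dec_apply_ne x.val ht] at this
      exact le_antisymm (hle2 t) this
    have hci : x.val i - 1 ≤ c.val i := by
      have := hle1 i; rw [dec_apply_self] at this; exact this
    rcases lt_or_eq_of_le hci with h | h
    · apply hcx'
      funext t
      by_cases ht : t = i
      · subst ht; have h3 := hle2 t; linarith
      · exact hoff t ht
    · apply hyc'
      funext t
      by_cases ht : t = i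
      · subst ht; rw [dec_apply_self]; linarith
      · rw [dec_apply_ne x.val ht, hoff t ht]

/-- Characterization of the covering relation in the subtype `↥(ladderL n u v)`. -/
lemma covby_iff {n : ℕ} {u v : ℕ → ℤ} (hu1 : u 1 = 1)
    {x y : ↥(ladderL n u v)} :
    y ⋖ x ↔ ∃ i, Rem n u x.val i ∧ y.val = dec x.val i := by
  constructor
  · rintro ⟨hlt, hnb⟩
    have hle : (y : ℕ → ℤ) ≤ x := (Subtype.coe_lt_coe.mpr hlt).le
    have hne : ∃ t, y.val t ≠ x.val t := by
      by_contra hc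
      push_neg at hc
      exact absurd (Subtype.ext (funext hc)) (ne_of_lt hlt)
    classical
    obtain ⟨i, hi, hmin⟩ : ∃ i, y.val i ≠ x.val i ∧ ∀ s, s < i → y.val s = x.val s :=
      ⟨Nat.find hne, Nat.find_spec hne, fun s hs => not_not.mp (Nat.find_min hne hs)⟩
    have hilt : y.val i < x.val i := lt_of_le_of_ne (hle i) hi
    obtain ⟨hbx, hmx, h0x⟩ := x.2
    obtain ⟨hby, hmy, h0y⟩ := y.2
    have hi1 : 1 ≤ i := by
      by_contra hc
      have h0 : i = 0 := by omega
      rw [h0, h0x 0 (Or.inl rfl), h0y 0 (Or.inl rfl)] at hi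
      exact hi rfl
    have hin : i ≤ n := by
      by_contra hc
      rw [h0x i (Or.inr (by omega)), h0y i (Or.inr (by omega))] at hi
      exact hi rfl
    have hrem : Rem n u x.val i := by
      refine ⟨hi1, hin, ?_, ?_⟩
      · have := (hby i hi1 hin).1
        linarith
      · by_cases h1 : i = 1
        · subst h1
          have h0 : x.val 0 = 0 := h0x 0 (Or.inl rfl)
          have hb1 := (hby 1 le_rfl hin).1
          rw [hu1] at hb1
          show x.val 0 < x.val 1 - 1
          linarith
        · have he : y.val (i - 1) = x.val (i - 1) := hmin _ (by omega)
          have hmono := hmy (i - 1) (by omega) (by omega)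
          rw [Nat.sub_add_cancel hi1] at hmono
          linarith [hle (i - 1)]
    refine ⟨i, hrem, ?_⟩
    have hzmem : dec x.val i ∈ ladderL n u v := dec_mem x.2 hrem
    have hyz : (y : ℕ → ℤ) ≤ dec x.val i := by
      intro t
      by_cases ht : t = i
      · subst ht; rw [dec_apply_self]; linarith
      · rw [dec_apply_ne _ ht]; exact hle t
    have hyz' : y ≤ (⟨dec x.val i, hzmem⟩ : ↥(ladderL n u v)) := hyz
    have hnlt : ¬ y < (⟨dec x.val i, hzmem⟩ : ↥(ladderL n u v)) :=
      fun hc => hnb hc (Subtype.coe_lt_coe.mp dec_lt)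
    exact congrArg Subtype.val (hyz'.lt_or_eq.resolve_left hnlt)
  · rintro ⟨i, hrem, hy⟩
    have h := dec_covby (x := x) hrem
    have hyy : y = (⟨dec x.val i, dec_mem x.2 hrem⟩ : ↥(ladderL n u v)) := Subtype.ext hy
    rw [hyy]
    exact h

lemma atuple_eq_lt {u : ℕ → ℤ} {n i : ℕ} {j : ℤ} {t : ℕ}
    (ht1 : 1 ≤ t) (htn : t ≤ n) (hti : t < i) : atuple u n i j t = u t := by
  unfold atuple
  rw [if_pos ⟨ht1, htn⟩, if_pos hti]

lemma atuple_eq_ge {u : ℕ → ℤ} {n i : ℕ} {j : ℤ} {t : ℕ}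
    (ht1 : 1 ≤ t) (htn : t ≤ n) (hti : i ≤ t) :
    atuple u n i j t = max (j + ((t : ℤ) - (i : ℤ))) (u t) := by
  unfold atuple
  rw [if_pos ⟨ht1, htn⟩, if_neg (Nat.not_lt.mpr hti)]

lemma atuple_eq_out {u : ℕ → ℤ} {n i : ℕ} {j : ℤ} {t : ℕ}
    (ht : ¬ (1 ≤ t ∧ t ≤ n)) : atuple u n i j t = 0 := by
  unfold atuple
  rw [if_neg ht]

/-- If `x ∈ P_𝓛` then `x` has a unique removable coordinate. -/
lemma PL_uniqueRem {n : ℕ} {u v : ℕ → ℤ}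
    (hu1 : u 1 = 1)
    (humono : ∀ i, 1 ≤ i → i + 1 ≤ n → u i < u (i + 1))
    {x : ↥(ladderL n u v)} (hx : x.val ∈ PL n u v) :
    ∃! i, Rem n u x.val i := by
  obtain ⟨i, j, hi1, hin, hj1, hj2, hxe⟩ := hx
  obtain ⟨hb, hm, h0⟩ := x.2
  have hai : x.val i = j := by
    rw [hxe, atuple_eq_ge hi1 hin le_rfl, sub_self, add_zero]
    exact max_eq_left (by linarith)
  have hremi : Rem n u x.val i := by
    refine ⟨hi1, hin, by rw [hai]; linarith, ?_⟩
    rw [hai]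
    by_cases h1 : i = 1
    · subst h1
      have h00 : x.val 0 = 0 := h0 0 (Or.inl rfl)
      show x.val 0 < j - 1
      rw [h00, hu1] at *
      linarith
    · have hp : x.val (i - 1) = u (i - 1) := by
        rw [hxe]; exact atuple_eq_lt (by omega) (by omega) (by omega)
      have hum : u (i - 1) < u i := by
        have := humono (i - 1) (by omega) (by omega)
        rwa [Nat.sub_add_cancel hi1] at this
      rw [hp]; linarith
  refine ⟨i, hremi, ?_⟩
  rintro t ⟨ht1, htn, hut, hprev⟩
  by_contra hne
  rcases Nat.lt_or_ge t i with hti | hti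
  · rw [hxe, atuple_eq_lt ht1 htn hti] at hut
    linarith
  · have hti' : i < t := by omega
    have hxt : x.val t = max (j + ((t : ℤ) - (i : ℤ))) (u t) := by
      rw [hxe]; exact atuple_eq_ge ht1 htn hti
    have hxt1 : x.val (t - 1) = max (j + (((t - 1 : ℕ) : ℤ) - (i : ℤ))) (u (t - 1)) := by
      rw [hxe]; exact atuple_eq_ge (by omega) (by omega) (by omega)
    have hcast : ((t - 1 : ℕ) : ℤ) = (t : ℤ) - 1 := by omega
    rcases le_total (j + ((t : ℤ) - (i : ℤ))) (u t) with hc | hc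
    · rw [hxt, max_eq_right hc] at hut
      linarith
    · rw [hxt, max_eq_left hc] at hprev
      have hge : j + (((t - 1 : ℕ) : ℤ) - (i : ℤ)) ≤ x.val (t - 1) := by
        rw [hxt1]; exact le_max_left _ _
      rw [hcast] at hge
      linarith

/-- If `x` has a unique removable coordinate then `x ∈ P_𝓛`. -/
lemma uniqueRem_PL {n : ℕ} {u v : ℕ → ℤ}
    (hu1 : u 1 = 1)
    (humono : ∀ i, 1 ≤ i → i + 1 ≤ n → u i < u (i + 1))
    {x : ↥(ladderL n u v)} (h : ∃! i, Rem n u x.val i) :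
    x.val ∈ PL n u v := by
  obtain ⟨i, ⟨hi1, hin, hui, hprev⟩, hiu⟩ := h
  obtain ⟨hb, hm, h0⟩ := x.2
  have hlow : ∀ t, 1 ≤ t → t < i → x.val t = u t := by
    intro t
    induction t using Nat.strong_induction_on with
    | _ t IH =>
      intro ht1 hti
      have hbt := hb t ht1 (by omega)
      by_contra hne
      have hgt : u t < x.val t := lt_of_le_of_ne hbt.1 (Ne.symm hne)
      have hremt : Rem n u x.val t := by
        refine ⟨ht1, by omega, by linarith, ?_⟩
        by_cases h1 : t = 1
        · subst h1
          have h00 : x.val 0 = 0 := h0 0 (Or.inl rfl)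
          show x.val 0 < x.val 1 - 1
          rw [h00, hu1] at *
          linarith
        · have hp : x.val (t - 1) = u (t - 1) := IH (t - 1) (by omega) (by omega) (by omega)
          have hum : u (t - 1) < u t := by
            have := humono (t - 1) (by omega) (by omega)
            rwa [Nat.sub_add_cancel ht1] at this
          rw [hp]; linarith
      have := hiu t hremt
      omega
  have hhigh : ∀ t, i ≤ t → t ≤ n → x.val t = max (x.val i + ((t : ℤ) - (i : ℤ))) (u t) := by
    intro t hit
    induction t, hit using Nat.le_induction with
    | base =>
      intro _
      rw [sub_self, add_zero]
      exact (max_eq_left (by linarith)).symm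
    | succ t hit IH =>
      intro htn1
      have htn : t ≤ n := by omega
      have hIH := IH htn
      have ht1 : 1 ≤ t := by omega
      have hmt := hm t ht1 htn1
      have hbt := hb (t + 1) (by omega) htn1
      by_cases hgt : max (x.val t + 1) (u (t + 1)) < x.val (t + 1)
      · exfalso
        have hremt : Rem n u x.val (t + 1) := by
          refine ⟨by omega, htn1, ?_, ?_⟩
          · have := le_max_right (x.val t + 1) (u (t + 1)); linarith
          · show x.val (t + 1 - 1) < x.val (t + 1) - 1
            simp only [Nat.add_sub_cancel]
            have := le_max_left (x.val t + 1) (u (t + 1)); linarith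
        have := hiu (t + 1) hremt
        omega
      · push_neg at hgt
        have he : x.val (t + 1) = max (x.val t + 1) (u (t + 1)) :=
          le_antisymm hgt (max_le (by linarith) hbt.1)
        have huu : u t + 1 ≤ u (t + 1) := by
          have := humono t ht1 htn1; linarith
        have hcast : ((t + 1 : ℕ) : ℤ) = (t : ℤ) + 1 := by omega
        rw [he, hIH, hcast]
        rcases le_total (x.val i + ((t : ℤ) - (i : ℤ))) (u t) with hc | hc
        · rw [max_eq_right hc, max_eq_right (by linarith : u t + 1 ≤ u (t + 1)),
            max_eq_right (by linarith : x.val i + ((t : ℤ) + 1 - (i : ℤ)) ≤ u (t + 1))]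
        · rw [max_eq_left hc]
          have : x.val i + ((t : ℤ) - (i : ℤ)) + 1 = x.val i + ((t : ℤ) + 1 - (i : ℤ)) := by ring
          rw [this]
  refine ⟨i, x.val i, hi1, hin, by linarith, (hb i hi1 hin).2, ?_⟩
  funext t
  by_cases htI : 1 ≤ t ∧ t ≤ n
  · obtain ⟨ht1, htn⟩ := htI
    by_cases hti : t < i
    · rw [hlow t ht1 hti, atuple_eq_lt ht1 htn hti]
    · push_neg at hti
      rw [hhigh t hti htn, atuple_eq_ge ht1 htn hti]
  · rw [h0 t (by omega), atuple_eq_out htI]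

theorem stmt3
    (n m : ℕ) (u v : ℕ → ℤ)
    (hn : 1 ≤ n) (hnm : n < m)
    (hu1 : u 1 = 1)
    (humono : ∀ i, 1 ≤ i → i + 1 ≤ n → u i < u (i + 1))
    (hum : u n < (m : ℤ))
    (hv1 : 1 < v 1)
    (hvmono : ∀ i, 1 ≤ i → i + 1 ≤ n → v i < v (i + 1))
    (hvn : v n = (m : ℤ))
    (huv : ∀ i, 1 ≤ i → i ≤ n → u i < v i)
    (hstep : ∀ i, 1 ≤ i → i + 1 ≤ n → u (i + 1) ≤ v i + 1) :
    ∀ x : ↥(ladderL n u v),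
      (∃! y : ↥(ladderL n u v), y ⋖ x) ↔ (x : ℕ → ℤ) ∈ PL n u v := by
  intro x
  constructor
  · rintro ⟨y, hy, hyu⟩
    apply uniqueRem_PL hu1 humono
    obtain ⟨i, hrem, hval⟩ := (covby_iff hu1).mp hy
    refine ⟨i, hrem, ?_⟩
    intro i' hrem'
    have h' := dec_covby (x := x) hrem'
    have he := hyu _ h'
    have hvals : dec x.val i' = dec x.val i := by
      rw [← hval]; exact congrArg Subtype.val he
    by_contra hne
    have e1 := congrFun hvals i'
    rw [dec_apply_self, dec_apply_ne x.val hne] at e1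
    linarith
  · intro hx
    obtain ⟨i, hrem, hiu⟩ := PL_uniqueRem hu1 humono hx
    refine ⟨⟨dec x.val i, dec_mem x.2 hrem⟩, dec_covby hrem, ?_⟩
    intro y' hy'
    obtain ⟨i', hrem', hval'⟩ := (covby_iff hu1).mp hy'
    rw [hiu i' hrem'] at hval'
    exact Subtype.ext hval'

end LadderPaper
end

section
/- Let i ∈ [n] and j ∈ [u_i+1, v_i]. Then: (i) a_{i,j−1} ∈ P_𝓛 (i.e., j−1 ∈ [u_i+1, v_i]) if and only if j ≥ u_i + 2; (ii) a_{i+1,j+1} ∈ P_𝓛 (i.e., i+1 ∈ [n] and j+1 ∈ [u_{i+1}+1, v_{i+1}]) if and only if i ≠ n and j ≥ u_{i+1}; (iii) for b ∈ P_𝓛, the element a_{i,j} covers b in the induced subposet P_𝓛 if and only if b = a_{i,j−1} or b = a_{i+1,j+1}. -/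
namespace LadderPaper

section Aux

variable {n : ℕ} {u v : ℕ → ℤ}

lemma umono' (humono : ∀ i, 1 ≤ i → i + 1 ≤ n → u i < u (i + 1)) :
    ∀ a b : ℕ, 1 ≤ a → a ≤ b → b ≤ n → u a + ((b : ℤ) - (a : ℤ)) ≤ u b := by
  intro a b ha hab hbn
  induction b with
  | zero => omega
  | succ k ih =>
    rcases Nat.lt_or_ge a (k + 1) with h | h
    · have h1 := ih (by omega) (by omega)
      have h2 := humono k (by omega) (by omega)
      push_cast at h1 ⊢
      omega
    · have : a = k + 1 := by omega
      subst this; simp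

lemma atuple_le_iff (humono : ∀ i, 1 ≤ i → i + 1 ≤ n → u i < u (i + 1))
    {i i' : ℕ} {j j' : ℤ}
    (hi1 : 1 ≤ i) (hin : i ≤ n) (hj1 : u i + 1 ≤ j)
    (hi1' : 1 ≤ i') (hin' : i' ≤ n) (hj1' : u i' + 1 ≤ j') :
    atuple u n i' j' ≤ atuple u n i j ↔ (i ≤ i' ∧ j' + (i : ℤ) ≤ j + (i' : ℤ)) := by
  constructor
  · intro h
    have h1 := h i'
    simp only [atuple, if_pos (⟨hi1', hin'⟩ : 1 ≤ i' ∧ i' ≤ n), lt_irrefl, if_neg] at h1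
    simp only [sub_self, add_zero] at h1
    by_cases hii : i' < i
    · rw [if_pos hii] at h1
      have : j' ≤ u i' := le_trans (le_max_left _ _) h1
      omega
    · rw [if_neg hii] at h1
      have h2 : j' ≤ max (j + ((i' : ℤ) - i)) (u i') := le_trans (le_max_left _ _) h1
      have h3 : j' ≤ j + ((i' : ℤ) - i) := by
        rcases max_cases (j + ((i' : ℤ) - i)) (u i') with ⟨he, _⟩ | ⟨he, _⟩ <;> omega
      exact ⟨by omega, by omega⟩
  · rintro ⟨hii, hjj⟩ t
    simp only [atuple]
    by_cases ht : 1 ≤ t ∧ t ≤ n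
    · rw [if_pos ht, if_pos ht]
      by_cases hti : t < i
      · rw [if_pos hti, if_pos (by omega)]
      · rw [if_neg hti]
        by_cases hti' : t < i'
        · rw [if_pos hti']
          exact le_max_right _ _
        · rw [if_neg hti']
          refine max_le (le_trans ?_ (le_max_left _ _)) (le_max_right _ _)
          omega
    · rw [if_neg ht, if_neg ht]

lemma atuple_lt_iff (humono : ∀ i, 1 ≤ i → i + 1 ≤ n → u i < u (i + 1))
    {i i' : ℕ} {j j' : ℤ}
    (hi1 : 1 ≤ i) (hin : i ≤ n) (hj1 : u i + 1 ≤ j)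
    (hi1' : 1 ≤ i') (hin' : i' ≤ n) (hj1' : u i' + 1 ≤ j') :
    atuple u n i' j' < atuple u n i j ↔
      (i ≤ i' ∧ j' + (i : ℤ) ≤ j + (i' : ℤ) ∧ ¬(i = i' ∧ j = j')) := by
  rw [lt_iff_le_and_ne, atuple_le_iff humono hi1 hin hj1 hi1' hin' hj1']
  constructor
  · rintro ⟨⟨h1, h2⟩, hne⟩
    refine ⟨h1, h2, ?_⟩
    rintro ⟨rfl, rfl⟩
    exact hne rfl
  · rintro ⟨h1, h2, hne⟩
    refine ⟨⟨h1, h2⟩, fun heq => ?_⟩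
    have hle1 : atuple u n i' j' ≤ atuple u n i j := heq.le
    have hle2 : atuple u n i j ≤ atuple u n i' j' := heq.ge
    rw [atuple_le_iff humono hi1 hin hj1 hi1' hin' hj1'] at hle1
    rw [atuple_le_iff humono hi1' hin' hj1' hi1 hin hj1] at hle2
    exact hne ⟨by omega, by omega⟩

lemma atuple_eq_utuple (humono : ∀ i, 1 ≤ i → i + 1 ≤ n → u i < u (i + 1))
    {i : ℕ} {j : ℤ} (hi1 : 1 ≤ i) (h : n < i ∨ j ≤ u i) :
    atuple u n i j = utuple u n := by
  funext t
  simp only [atuple, utuple]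
  by_cases ht : 1 ≤ t ∧ t ≤ n
  · rw [if_pos ht, if_pos ht]
    by_cases hti : t < i
    · rw [if_pos hti]
    · rw [if_neg hti]
      rcases h with h | h
      · omega
      · have := umono' humono i t hi1 (by omega) ht.2
        have : j + ((t : ℤ) - i) ≤ u t := by omega
        exact max_eq_right this
  · rw [if_neg ht, if_neg ht]

lemma utuple_not_mem_PL : utuple u n ∉ PL n u v := by
  rintro ⟨i, j, hi1, hin, hj1, hj2, heq⟩
  have h := congrFun heq i
  simp only [atuple, utuple] at h
  rw [if_pos (⟨hi1, hin⟩ : 1 ≤ i ∧ i ≤ n), if_pos (⟨hi1, hin⟩ : 1 ≤ i ∧ i ≤ n),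
    if_neg (lt_irrefl i), sub_self, add_zero] at h
  have : u i ≥ j := by
    rcases max_cases j (u i) with ⟨he, _⟩ | ⟨he, _⟩ <;> omega
  omega

end Aux

theorem stmt5
    (n m : ℕ) (u v : ℕ → ℤ)
    (hn : 1 ≤ n) (hnm : n < m)
    (hu1 : u 1 = 1)
    (humono : ∀ i, 1 ≤ i → i + 1 ≤ n → u i < u (i + 1))
    (hum : u n < (m : ℤ))
    (hv1 : 1 < v 1)
    (hvmono : ∀ i, 1 ≤ i → i + 1 ≤ n → v i < v (i + 1))
    (hvn : v n = (m : ℤ))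
    (huv : ∀ i, 1 ≤ i → i ≤ n → u i < v i)
    (hstep : ∀ i, 1 ≤ i → i + 1 ≤ n → u (i + 1) ≤ v i + 1)
    (i : ℕ) (j : ℤ) (hi1 : 1 ≤ i) (hin : i ≤ n) (hj1 : u i + 1 ≤ j) (hj2 : j ≤ v i) :
    ((u i + 1 ≤ j - 1 ∧ j - 1 ≤ v i) ↔ u i + 2 ≤ j) ∧
    ((i + 1 ≤ n ∧ u (i + 1) + 1 ≤ j + 1 ∧ j + 1 ≤ v (i + 1)) ↔ (i ≠ n ∧ u (i + 1) ≤ j)) ∧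
    (∀ x b : ↥(PL n u v), (x : ℕ → ℤ) = atuple u n i j →
      (b ⋖ x ↔
        ((b : ℕ → ℤ) = atuple u n i (j - 1) ∨ (b : ℕ → ℤ) = atuple u n (i + 1) (j + 1)))) := by
  refine ⟨by omega, ?_, ?_⟩
  · constructor
    · rintro ⟨h1, h2, h3⟩
      exact ⟨by omega, by omega⟩
    · rintro ⟨h1, h2⟩
      have hin' : i + 1 ≤ n := by omega
      have := hvmono i hi1 hin'
      exact ⟨hin', by omega, by omega⟩
  · intro x b hx
    obtain ⟨i', j', hi1', hin', hj1', hj2', hb⟩ := b.2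
    constructor
    · intro hcov
      have hbx : atuple u n i' j' < atuple u n i j := by
        rw [← hb, ← hx]; exact Subtype.coe_lt_coe.2 hcov.1
      rw [atuple_lt_iff humono hi1 hin hj1 hi1' hin' hj1'] at hbx
      obtain ⟨hii, hjj, hne⟩ := hbx
      rcases eq_or_lt_of_le hii with heq | hlt
      · -- i = i'
        subst heq
        by_cases hcase : j' = j - 1
        · left; rw [hb, hcase]
        · exfalso
          have hj' : j' ≤ j - 2 := by omega
          have hcm : atuple u n i (j - 1) ∈ PL n u v :=
            ⟨i, j - 1, hi1, hin, by omega, by omega, rfl⟩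
          refine hcov.2 (c := ⟨atuple u n i (j - 1), hcm⟩) ?_ ?_
          · rw [← Subtype.coe_lt_coe, hb]
            show atuple u n i j' < atuple u n i (j - 1)
            rw [atuple_lt_iff humono hi1 hin (by omega) hi1 hin hj1']
            exact ⟨le_refl i, by omega, by omega⟩
          · rw [← Subtype.coe_lt_coe, hx]
            show atuple u n i (j - 1) < atuple u n i j
            rw [atuple_lt_iff humono hi1 hin hj1 hi1 hin (by omega)]
            exact ⟨le_refl i, by omega, by omega⟩
      · -- i < i'
        have hum := umono' humono (i + 1) i' (by omega) (by omega) hin'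
        have hui1 : u (i + 1) ≤ j := by push_cast at hum; omega
        have hv' := hvmono i hi1 (by omega)
        have hju1 : u (i + 1) + 1 ≤ j + 1 := by omega
        have hcm : atuple u n (i + 1) (j + 1) ∈ PL n u v :=
          ⟨i + 1, j + 1, by omega, by omega, hju1, by omega, rfl⟩
        by_cases hbc : (b : ℕ → ℤ) = atuple u n (i + 1) (j + 1)
        · right; exact hbc
        · exfalso
          refine hcov.2 (c := ⟨atuple u n (i + 1) (j + 1), hcm⟩) ?_ ?_
          · rw [← Subtype.coe_lt_coe]
            show (b : ℕ → ℤ) < atuple u n (i + 1) (j + 1)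
            refine lt_of_le_of_ne ?_ hbc
            rw [hb, atuple_le_iff humono (by omega) (by omega) hju1 hi1' hin' hj1']
            refine ⟨by omega, by push_cast; omega⟩
          · rw [← Subtype.coe_lt_coe, hx]
            show atuple u n (i + 1) (j + 1) < atuple u n i j
            rw [atuple_lt_iff humono hi1 hin hj1 (by omega) (by omega) hju1]
            refine ⟨by omega, by push_cast; omega, by omega⟩
    · intro h
      rcases h with hb' | hb'
      · -- b = a_{i, j-1}
        have hjlow : u i + 1 ≤ j - 1 := by
          by_contra hcon
          have he : atuple u n i (j - 1) = utuple u n :=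
            atuple_eq_utuple humono hi1 (Or.inr (by omega))
          have hm := b.2
          rw [hb', he] at hm
          exact utuple_not_mem_PL hm
        constructor
        · rw [← Subtype.coe_lt_coe, hb', hx,
            atuple_lt_iff humono hi1 hin hj1 hi1 hin hjlow]
          exact ⟨le_refl i, by omega, by omega⟩
        · intro c hbc hcx
          obtain ⟨i3, j3, h31, h3n, h3j1, h3j2, hc⟩ := c.2
          rw [← Subtype.coe_lt_coe, hb', hc,
            atuple_lt_iff humono h31 h3n h3j1 hi1 hin hjlow] at hbc
          rw [← Subtype.coe_lt_coe, hc, hx,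
            atuple_lt_iff humono hi1 hin hj1 h31 h3n h3j1] at hcx
          omega
      · -- b = a_{i+1, j+1}
        have hi1n : i + 1 ≤ n := by
          by_contra hcon
          have he : atuple u n (i + 1) (j + 1) = utuple u n :=
            atuple_eq_utuple humono (by omega) (Or.inl (by omega))
          have hm := b.2
          rw [hb', he] at hm
          exact utuple_not_mem_PL hm
        have hju1 : u (i + 1) + 1 ≤ j + 1 := by
          by_contra hcon
          have he : atuple u n (i + 1) (j + 1) = utuple u n :=
            atuple_eq_utuple humono (by omega) (Or.inr (by omega))
          have hm := b.2
          rw [hb', he] at hm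
          exact utuple_not_mem_PL hm
        have hv' := hvmono i hi1 hi1n
        constructor
        · rw [← Subtype.coe_lt_coe, hb', hx,
            atuple_lt_iff humono hi1 hin hj1 (by omega) hi1n hju1]
          exact ⟨by omega, by push_cast; omega, by omega⟩
        · intro c hbc hcx
          obtain ⟨i3, j3, h31, h3n, h3j1, h3j2, hc⟩ := c.2
          rw [← Subtype.coe_lt_coe, hb', hc,
            atuple_lt_iff humono h31 h3n h3j1 (by omega) hi1n hju1] at hbc
          rw [← Subtype.coe_lt_coe, hc, hx,
            atuple_lt_iff humono hi1 hin hj1 h31 h3n h3j1] at hcx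
          -- hbc : i3 ≤ i+1 ∧ (j+1)+i3 ≤ j3+(i+1) ∧ ¬(i3 = i+1 ∧ j3 = j+1)
          -- hcx : i ≤ i3 ∧ j3+i ≤ j+i3 ∧ ¬(i = i3 ∧ j = j3)
          obtain ⟨b1, b2, b3⟩ := hbc
          obtain ⟨c1, c2, c3⟩ := hcx
          push_cast at b2 c2
          omega

end LadderPaper
end

section
/- Let r ≥ 1 be an integer and let C = { i ∈ [n−1] : v_i < u_{i+1} } ∪ { n }. The poset P_{𝓛×[r]} is connected if and only if r = 1 and |C| = 1. Moreover, the number of connected components of P_{𝓛×[r]} equals |C| when r = 1 and equals |C| + 1 when r ≥ 2. -/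
namespace LadderPaper

section Aux
variable {n : ℕ} {u v : ℕ → ℤ}

lemma mono_step {w : ℕ → ℤ} (hmono : ∀ i, 1 ≤ i → i + 1 ≤ n → w i < w (i + 1)) :
    ∀ s t, 1 ≤ s → s ≤ t → t ≤ n → w s + ((t : ℤ) - (s : ℤ)) ≤ w t := by
  intro s t hs hst htn
  induction t, hst using Nat.le_induction with
  | base => simp
  | succ t ht ih =>
    have h1 : w t < w (t + 1) := hmono t (le_trans hs ht) htn
    have h2 := ih (by omega)
    push_cast
    push_cast at h2
    linarith

lemma atuple_out {i : ℕ} {j : ℤ} {t : ℕ} (h : ¬ (1 ≤ t ∧ t ≤ n)) : atuple u n i j t = 0 := by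
  simp [atuple, h]

lemma atuple_lt {i : ℕ} {j : ℤ} {t : ℕ} (h1 : 1 ≤ t) (h2 : t ≤ n) (h3 : t < i) :
    atuple u n i j t = u t := by
  simp [atuple, h1, h2, h3]

lemma atuple_ge {i : ℕ} {j : ℤ} {t : ℕ} (h1 : 1 ≤ t) (h2 : t ≤ n) (h3 : ¬ t < i) :
    atuple u n i j t = max (j + ((t : ℤ) - (i : ℤ))) (u t) := by
  simp [atuple, h1, h2, h3]

lemma atuple_self {i : ℕ} {j : ℤ} (h1 : 1 ≤ i) (h2 : i ≤ n) (h3 : u i ≤ j) :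
    atuple u n i j i = j := by
  rw [atuple_ge h1 h2 (lt_irrefl i)]
  simp
  omega

lemma atuple_mono_j {i : ℕ} {j j' : ℤ} (h : j ≤ j') : atuple u n i j ≤ atuple u n i j' := by
  intro t
  by_cases ht : 1 ≤ t ∧ t ≤ n
  · by_cases hti : t < i
    · rw [atuple_lt ht.1 ht.2 hti, atuple_lt ht.1 ht.2 hti]
    · rw [atuple_ge ht.1 ht.2 hti, atuple_ge ht.1 ht.2 hti]
      exact max_le_max (by linarith) le_rfl
  · rw [atuple_out ht, atuple_out ht]

lemma atuple_succ_le {i : ℕ} {j j' : ℤ} (h : j' ≤ j + 1) (hui : u i ≤ j) :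
    atuple u n (i + 1) j' ≤ atuple u n i j := by
  intro t
  by_cases ht : 1 ≤ t ∧ t ≤ n
  · by_cases hti : t < i
    · rw [atuple_lt ht.1 ht.2 hti, atuple_lt ht.1 ht.2 (by omega)]
    · rw [atuple_ge ht.1 ht.2 hti]
      by_cases hti' : t < i + 1
      · rw [atuple_lt (n := n) (i := i + 1) (j := j') ht.1 ht.2 hti']
        exact le_max_right _ _
      · rw [atuple_ge ht.1 ht.2 hti']
        apply max_le_max _ le_rfl
        push_cast
        omega
  · rw [atuple_out ht, atuple_out ht]

lemma not_atuple_le_of_lt {s t : ℕ} {j j' : ℤ} (hs : 1 ≤ s) (hst : s < t) (htn : t ≤ n)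
    (hj : u s + 1 ≤ j) : ¬ atuple u n s j ≤ atuple u n t j' := by
  intro h
  have this := Pi.le_def.mp h s
  rw [atuple_self (n := n) hs (by omega) (by omega), atuple_lt (n := n) (j := j') hs (by omega) hst] at this
  omega

lemma not_atuple_ge_of_gap (humono : ∀ i, 1 ≤ i → i + 1 ≤ n → u i < u (i + 1))
    (hvmono : ∀ i, 1 ≤ i → i + 1 ≤ n → v i < v (i + 1))
    {s t i0 : ℕ} {j j' : ℤ}
    (hs : 1 ≤ s) (hst : s < t) (htn : t ≤ n) (hsi : s ≤ i0) (hit : i0 < t)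
    (hgap : v i0 < u (i0 + 1)) (hjv : j ≤ v s) (hj' : u t + 1 ≤ j') :
    ¬ atuple u n t j' ≤ atuple u n s j := by
  intro h
  have h1 := Pi.le_def.mp h t
  rw [atuple_self (n := n) (by omega) htn (by omega), atuple_ge (n := n) (i := s) (j := j) (by omega) htn (by omega)] at h1
  have h2 : u (i0 + 1) + ((t : ℤ) - ((i0 : ℕ) + 1 : ℕ)) ≤ u t :=
    mono_step humono (i0 + 1) t (by omega) (by omega) htn
  have h3 : v s + ((i0 : ℤ) - (s : ℤ)) ≤ v i0 := by
    rcases eq_or_lt_of_le hsi with rfl | hlt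
    · simp
    · exact mono_step hvmono s i0 hs hsi (by omega)
  rcases le_max_iff.mp h1 with h4 | h4
  · push_cast at h2
    omega
  · omega

lemma not_atuple_le_utuple {i : ℕ} {j : ℤ} (hi : 1 ≤ i) (hin : i ≤ n) (hj : u i + 1 ≤ j) :
    ¬ atuple u n i j ≤ utuple u n := by
  intro h
  have this := Pi.le_def.mp h i
  rw [atuple_self (n := n) hi hin (by omega)] at this
  simp [utuple, hi, hin] at this
  omega


/-- Least index where `c` differs from `u` (within `[1,n]`). -/
noncomputable def idxOf (n : ℕ) (u : ℕ → ℤ) (c : ℕ → ℤ) : ℕ :=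
  sInf {t | 1 ≤ t ∧ t ≤ n ∧ c t ≠ u t}

lemma idxOf_atuple {i : ℕ} {j : ℤ} (hi : 1 ≤ i) (hin : i ≤ n) (hj : u i + 1 ≤ j) :
    idxOf n u (atuple u n i j) = i := by
  have hmem : i ∈ {t | 1 ≤ t ∧ t ≤ n ∧ atuple u n i j t ≠ u t} := by
    refine ⟨hi, hin, ?_⟩
    rw [atuple_self (n := n) hi hin (by omega)]
    omega
  refine le_antisymm (Nat.sInf_le hmem) ?_
  have hmem2 := Nat.sInf_mem (s := {t | 1 ≤ t ∧ t ≤ n ∧ atuple u n i j t ≠ u t}) ⟨i, hmem⟩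
  by_contra hcon
  push_neg at hcon
  obtain ⟨h1, h2, h3⟩ := hmem2
  exact h3 (atuple_lt h1 h2 hcon)

/-- Top of the block containing `i`. -/
noncomputable def btop (n : ℕ) (u v : ℕ → ℤ) (i : ℕ) : ℕ :=
  sInf {q | i ≤ q ∧ inC n u v q}

lemma btop_spec (hin : i ≤ n) : i ≤ btop n u v i ∧ inC n u v (btop n u v i) :=
  Nat.sInf_mem (s := {q | i ≤ q ∧ inC n u v q}) ⟨n, hin, Or.inr rfl⟩

lemma btop_le {q : ℕ} (hq : i ≤ q) (h : inC n u v q) : btop n u v i ≤ q :=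
  Nat.sInf_le ⟨hq, h⟩

lemma inC_bounds (hn : 1 ≤ n) {q : ℕ} (h : inC n u v q) : 1 ≤ q ∧ q ≤ n := by
  rcases h with ⟨h1, h2, _⟩ | rfl
  · omega
  · omega

lemma btop_le_n (hin : i ≤ n) : btop n u v i ≤ n := btop_le hin (Or.inr rfl)

lemma btop_eq_self (hn : 1 ≤ n) (h : inC n u v i) : btop n u v i = i :=
  le_antisymm (btop_le le_rfl h) (btop_spec (inC_bounds hn h).2).1

lemma btop_nogap (hin : i ≤ n) {k : ℕ} (h1 : i ≤ k) (h2 : k < btop n u v i) :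
    ¬ inC n u v k := fun hc => absurd (btop_le h1 hc) (by omega)

lemma btop_eq_of_nogap {s t : ℕ} (hts : t ≤ s) (hsn : s ≤ n)
    (hno : ∀ k, t ≤ k → k < s → ¬ inC n u v k) : btop n u v t = btop n u v s := by
  refine le_antisymm ?_ ?_
  · have h := btop_spec (u := u) (v := v) hsn
    exact btop_le (le_trans hts h.1) h.2
  · have h := btop_spec (u := u) (v := v) (le_trans hts hsn)
    have hst : s ≤ btop n u v t := by
      by_contra hcon
      push_neg at hcon
      exact hno _ h.1 hcon h.2
    exact btop_le hst h.2

lemma btop_succ (hn1 : i + 1 ≤ n) (h : ¬ inC n u v i) :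
    btop n u v i = btop n u v (i + 1) := by
  refine btop_eq_of_nogap (by omega) hn1 ?_
  intro k hk1 hk2
  have : k = i := by omega
  rw [this]
  exact h

lemma mem_Cset {q : ℕ} : q ∈ Cset n u v ↔ inC n u v q := by
  simp only [Cset, inC, Set.mem_union, Set.mem_setOf_eq, Set.mem_singleton_iff]

lemma Cset_finite : (Cset n u v).Finite := by
  apply Set.Finite.subset (Set.finite_Iic n)
  intro q hq
  rcases mem_Cset.mp hq with ⟨_, h2, _⟩ | rfl
  · exact Set.mem_Iic.mpr (by omega)
  · exact Set.mem_Iic.mpr le_rfl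


noncomputable def fval (n : ℕ) (u v : ℕ → ℤ) (p : (ℕ → ℤ) × ℤ) : ℕ :=
  if p.2 = 1 then btop n u v (idxOf n u p.1) else 0

lemma atuple_mem_PLr {r : ℤ} {i : ℕ} {j : ℤ} (hi : 1 ≤ i) (hin : i ≤ n)
    (hj1 : u i + 1 ≤ j) (hj2 : j ≤ v i) :
    ((atuple u n i j, 1) : (ℕ → ℤ) × ℤ) ∈ PLr n u v r :=
  Or.inl ⟨⟨i, j, hi, hin, hj1, hj2, rfl⟩, rfl⟩

lemma fval_pair {p : (ℕ → ℤ) × ℤ} {i : ℕ} {j : ℤ} (hi : 1 ≤ i) (hin : i ≤ n)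
    (hj1 : u i + 1 ≤ j) (h1 : p.1 = atuple u n i j) (h2 : p.2 = 1) :
    fval n u v p = btop n u v i := by
  rw [fval, if_pos h2, h1, idxOf_atuple hi hin hj1]

lemma fval_ne_one {p : (ℕ → ℤ) × ℤ} (h : p.2 ≠ 1) : fval n u v p = 0 := if_neg h

lemma fval_le_eq (humono : ∀ i, 1 ≤ i → i + 1 ≤ n → u i < u (i + 1))
    (hvmono : ∀ i, 1 ≤ i → i + 1 ≤ n → v i < v (i + 1))
    {r : ℤ} {p q : (ℕ → ℤ) × ℤ}
    (hp : p ∈ PLr n u v r) (hq : q ∈ PLr n u v r) (hle : p ≤ q) :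
    fval n u v p = fval n u v q := by
  rcases hp with ⟨⟨s, j, hs1, hs2, hj1, hj2, hps⟩, hp2⟩ | ⟨hpu, hp2, _⟩
  · rcases hq with ⟨⟨t, j', ht1, ht2, hj1', hj2', hqs⟩, hq2⟩ | ⟨hqu, hq2, _⟩
    · have h1 : p.1 ≤ q.1 := hle.1
      rw [hps, hqs] at h1
      rw [fval_pair hs1 hs2 hj1 hps hp2, fval_pair ht1 ht2 hj1' hqs hq2]
      rcases lt_trichotomy s t with h | h | h
      · exact absurd h1 (not_atuple_le_of_lt hs1 h ht2 hj1)
      · rw [h]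
      · refine (btop_eq_of_nogap (by omega) hs2 ?_).symm
        intro k hk1 hk2 hc
        rcases hc with ⟨hk3, hk4, hk5⟩ | rfl
        · exact not_atuple_ge_of_gap humono hvmono ht1 h hs2 hk1 hk2 hk5 hj2' hj1 h1
        · omega
    · exfalso
      have h1 : p.1 ≤ q.1 := hle.1
      rw [hps, hqu] at h1
      exact not_atuple_le_utuple hs1 hs2 hj1 h1
  · rcases hq with ⟨_, hq2⟩ | ⟨hqu, hq2, _⟩
    · exfalso
      have := hle.2
      omega
    · rw [fval, fval, if_neg (by omega), if_neg (by omega)]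

lemma fval_walk (humono : ∀ i, 1 ≤ i → i + 1 ≤ n → u i < u (i + 1))
    (hvmono : ∀ i, 1 ≤ i → i + 1 ≤ n → v i < v (i + 1))
    {r : ℤ} {x y : ↥(PLr n u v r)}
    (w : (compGraph ↥(PLr n u v r)).Walk x y) : fval n u v x.val = fval n u v y.val := by
  induction w with
  | nil => rfl
  | @cons a b c h _ ih =>
    refine Eq.trans ?_ ih
    rcases h.2 with hle | hle
    · exact fval_le_eq humono hvmono a.2 b.2 (Subtype.coe_le_coe.mpr hle)
    · exact (fval_le_eq humono hvmono b.2 a.2 (Subtype.coe_le_coe.mpr hle)).symm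

lemma reachable_of_comp {α : Type*} [Preorder α] {x y : α} (h : x ≤ y ∨ y ≤ x) :
    (compGraph α).Reachable x y := by
  by_cases e : x = y
  · rw [e]
  · exact SimpleGraph.Adj.reachable ⟨e, h⟩

lemma reach_block (hn : 1 ≤ n) (huv : ∀ i, 1 ≤ i → i ≤ n → u i < v i) {r : ℤ} (d : ℕ) :
    ∀ i j, 1 ≤ i → i ≤ n → u i + 1 ≤ j → j ≤ v i → btop n u v i = i + d →
    ∀ (x y : ↥(PLr n u v r)), x.val = (atuple u n i j, 1) →
      y.val = (atuple u n (i + d) (u (i + d) + 1), 1) →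
      (compGraph ↥(PLr n u v r)).Reachable x y := by
  induction d with
  | zero =>
    intro i j hi hin hj1 hj2 hb x y hx hy
    apply reachable_of_comp
    right
    rw [← Subtype.coe_le_coe, hx, hy]
    exact Prod.mk_le_mk.mpr ⟨atuple_mono_j hj1, le_rfl⟩
  | succ d ih =>
    intro i j hi hin hj1 hj2 hb x y hx hy
    have hnotC : ¬ inC n u v i := by
      intro hc
      have := btop_eq_self hn hc
      omega
    have hin1 : i + 1 ≤ n := by
      rcases Nat.lt_or_ge i n with h | h
      · omega
      · exact absurd (Or.inr (by omega)) hnotC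
    have hgap : u (i + 1) ≤ v i := by
      by_contra hcon
      push_neg at hcon
      exact hnotC (Or.inl ⟨hi, hin1, hcon⟩)
    have hui : u i + 1 ≤ v i := huv i hi hin
    set j0 := max (u (i + 1)) (u i + 1) with hj0
    have hj0a : u i + 1 ≤ j0 := le_max_right _ _
    have hj0b : j0 ≤ v i := max_le hgap hui
    have hu1 : u (i + 1) + 1 ≤ v (i + 1) := huv (i + 1) (by omega) hin1
    set z1 : ↥(PLr n u v r) := ⟨(atuple u n i j0, 1), atuple_mem_PLr hi hin hj0a hj0b⟩ with hz1
    set z2 : ↥(PLr n u v r) :=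
      ⟨(atuple u n (i + 1) (u (i + 1) + 1), 1), atuple_mem_PLr (by omega) hin1 le_rfl hu1⟩ with hz2
    have r1 : (compGraph ↥(PLr n u v r)).Reachable x z1 := by
      apply reachable_of_comp
      rcases le_total j j0 with h | h
      · left
        rw [← Subtype.coe_le_coe, hx, hz1]
        exact Prod.mk_le_mk.mpr ⟨atuple_mono_j h, le_rfl⟩
      · right
        rw [← Subtype.coe_le_coe, hx, hz1]
        exact Prod.mk_le_mk.mpr ⟨atuple_mono_j h, le_rfl⟩
    have r2 : (compGraph ↥(PLr n u v r)).Reachable z2 z1 := by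
      apply reachable_of_comp
      left
      rw [← Subtype.coe_le_coe, hz1, hz2]
      refine Prod.mk_le_mk.mpr ⟨atuple_succ_le (by omega) (by omega), le_rfl⟩
    have hb' : btop n u v (i + 1) = (i + 1) + d := by
      rw [← btop_succ hin1 hnotC]
      omega
    have r3 : (compGraph ↥(PLr n u v r)).Reachable z2 y := by
      refine ih (i + 1) (u (i + 1) + 1) (by omega) hin1 le_rfl hu1 hb' z2 y rfl ?_
      rw [hy, show i + 1 + d = i + (d + 1) from by omega]
    exact r1.trans (r2.symm.trans r3)

end Aux

theorem stmt6
    (n m : ℕ) (u v : ℕ → ℤ)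
    (hn : 1 ≤ n) (hnm : n < m)
    (hu1 : u 1 = 1)
    (humono : ∀ i, 1 ≤ i → i + 1 ≤ n → u i < u (i + 1))
    (hum : u n < (m : ℤ))
    (hv1 : 1 < v 1)
    (hvmono : ∀ i, 1 ≤ i → i + 1 ≤ n → v i < v (i + 1))
    (hvn : v n = (m : ℤ))
    (huv : ∀ i, 1 ≤ i → i ≤ n → u i < v i)
    (hstep : ∀ i, 1 ≤ i → i + 1 ≤ n → u (i + 1) ≤ v i + 1)
    (r : ℤ) (hr : 1 ≤ r) :
    ((compGraph ↥(PLr n u v r)).Connected ↔ (r = 1 ∧ (Cset n u v).ncard = 1)) ∧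
    (r = 1 →
      Nat.card (compGraph ↥(PLr n u v r)).ConnectedComponent = (Cset n u v).ncard) ∧
    (2 ≤ r →
      Nat.card (compGraph ↥(PLr n u v r)).ConnectedComponent = (Cset n u v).ncard + 1) := by
  classical
  set G := compGraph ↥(PLr n u v r) with hG
  -- the canonical vertex attached to an index i (with j = u i + 1)
  have hvert : ∀ i, 1 ≤ i → i ≤ n →
      ((atuple u n i (u i + 1), 1) : (ℕ → ℤ) × ℤ) ∈ PLr n u v r :=
    fun i hi hin => atuple_mem_PLr hi hin le_rfl (huv i hi hin)
  -- key: reachability from equality of fval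
  have key_reach : ∀ x y : ↥(PLr n u v r),
      fval n u v x.val = fval n u v y.val → G.Reachable x y := by
    intro x y hf
    rcases hx0 : x.2 with ⟨⟨i, j, hi1, hi2, hj1, hj2, hx1⟩, hx2⟩ | ⟨hx1, hx2, hx3⟩
    · rcases hy0 : y.2 with ⟨⟨i', j', hi1', hi2', hj1', hj2', hy1⟩, hy2⟩ | ⟨hy1, hy2, hy3⟩
      · -- both layer 1
        have e1 : fval n u v x.val = btop n u v i := fval_pair hi1 hi2 hj1 hx1 hx2
        have e2 : fval n u v y.val = btop n u v i' := fval_pair hi1' hi2' hj1' hy1 hy2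
        have hbb : btop n u v i = btop n u v i' := by rw [← e1, ← e2, hf]
        have hQ1 : i ≤ btop n u v i := (btop_spec hi2).1
        have hQn : btop n u v i ≤ n := btop_le_n hi2
        have hQ1' : i' ≤ btop n u v i' := (btop_spec hi2').1
        set Q := btop n u v i with hQdef
        set z : ↥(PLr n u v r) :=
          ⟨(atuple u n Q (u Q + 1), 1), hvert Q (by omega) hQn⟩ with hz
        have rx : G.Reachable x z := by
          refine reach_block hn huv (Q - i) i j hi1 hi2 hj1 hj2 (by omega) x z
            (Prod.ext hx1 hx2) ?_
          rw [show i + (Q - i) = Q from by omega]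
        have ry : G.Reachable y z := by
          refine reach_block hn huv (Q - i') i' j' hi1' hi2' hj1' hj2' (by omega) y z
            (Prod.ext hy1 hy2) ?_
          rw [show i' + (Q - i') = Q from by omega]
        exact rx.trans ry.symm
      · -- mixed: impossible
        exfalso
        have e1 : fval n u v x.val = btop n u v i := fval_pair hi1 hi2 hj1 hx1 hx2
        have e2 : fval n u v y.val = 0 := by rw [fval, if_neg (by omega)]
        have := (btop_spec (u := u) (v := v) hi2).1
        omega
    · rcases hy0 : y.2 with ⟨⟨i', j', hi1', hi2', hj1', hj2', hy1⟩, hy2⟩ | ⟨hy1, hy2, hy3⟩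
      · exfalso
        have e2 : fval n u v y.val = btop n u v i' := fval_pair hi1' hi2' hj1' hy1 hy2
        have e1 : fval n u v x.val = 0 := by rw [fval, if_neg (by omega)]
        have := (btop_spec (u := u) (v := v) hi2').1
        omega
      · -- both utuple layer
        apply reachable_of_comp
        rcases le_total x.val.2 y.val.2 with h | h
        · left
          rw [← Subtype.coe_le_coe, Prod.le_def, hx1, hy1]
          exact ⟨le_rfl, h⟩
        · right
          rw [← Subtype.coe_le_coe, Prod.le_def, hx1, hy1]
          exact ⟨le_rfl, h⟩
  have key_inv : ∀ x y : ↥(PLr n u v r), G.Reachable x y →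
      fval n u v x.val = fval n u v y.val := by
    intro x y h
    exact h.elim fun w => fval_walk humono hvmono w
  have key_inv' : ∀ (p q : (ℕ → ℤ) × ℤ) (hp : p ∈ PLr n u v r) (hq : q ∈ PLr n u v r),
      G.Reachable ⟨p, hp⟩ ⟨q, hq⟩ → fval n u v p = fval n u v q :=
    fun p q hp hq h => key_inv _ _ h
  -- the component invariant
  set F : G.ConnectedComponent → ℕ :=
    SimpleGraph.ConnectedComponent.lift (fun x => fval n u v x.val)
      (fun x y p _ => fval_walk humono hvmono p) with hF
  have hFmk : ∀ x : ↥(PLr n u v r), F (G.connectedComponentMk x) = fval n u v x.val :=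
    fun x => rfl
  have hFinj : Function.Injective F := by
    intro a b
    refine SimpleGraph.ConnectedComponent.ind₂ (fun x y hxy => ?_) a b
    rw [hFmk, hFmk] at hxy
    exact SimpleGraph.ConnectedComponent.sound (key_reach x y hxy)
  -- fval values of layer-one vertices lie in Cset
  have hfval_mem : ∀ x : ↥(PLr n u v r), x.val.1 ∈ PL n u v → x.val.2 = 1 →
      fval n u v x.val ∈ Cset n u v := by
    rintro x ⟨i, j, hi1, hi2, hj1, hj2, hx1⟩ hx2
    rw [fval_pair hi1 hi2 hj1 hx1 hx2]
    exact mem_Cset.mpr (btop_spec hi2).2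
  have hfval_C : ∀ q ∈ Cset n u v,
      fval n u v ((atuple u n q (u q + 1), 1) : (ℕ → ℤ) × ℤ) = q := by
    intro q hq
    have hb := inC_bounds hn (mem_Cset.mp hq)
    rw [fval_pair hb.1 hb.2 le_rfl rfl rfl]
    exact btop_eq_self hn (mem_Cset.mp hq)
  have hncards : ∀ S : Set ℕ, Set.range F = S →
      Nat.card G.ConnectedComponent = S.ncard := by
    intro S hS
    rw [Nat.card_congr (Equiv.ofInjective F hFinj), ← hS, Nat.card_coe_set_eq]
  -- case r = 1 : range F = Cset
  have hrange1 : r = 1 → Set.range F = Cset n u v := by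
    intro hr1
    ext c
    constructor
    · rintro ⟨comp, rfl⟩
      refine SimpleGraph.ConnectedComponent.ind (fun x => ?_) comp
      rw [hFmk]
      rcases x.2 with ⟨h1, h2⟩ | ⟨_, h2, h3⟩
      · exact hfval_mem x h1 h2
      · omega
    · intro hc
      have hb := inC_bounds hn (mem_Cset.mp hc)
      exact ⟨G.connectedComponentMk ⟨_, hvert c hb.1 hb.2⟩, (hFmk _).trans (hfval_C c hc)⟩
  have hrange2 : 2 ≤ r → Set.range F = insert 0 (Cset n u v) := by
    intro hr2
    ext c
    constructor
    · rintro ⟨comp, rfl⟩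
      refine SimpleGraph.ConnectedComponent.ind (fun x => ?_) comp
      rw [hFmk]
      rcases x.2 with ⟨h1, h2⟩ | ⟨_, h2, h3⟩
      · exact Set.mem_insert_of_mem _ (hfval_mem x h1 h2)
      · have h0 : fval n u v x.val = 0 := fval_ne_one (by omega)
        rw [h0]
        exact Set.mem_insert _ _
    · intro hc
      rcases Set.mem_insert_iff.mp hc with rfl | hc
      · refine ⟨G.connectedComponentMk ⟨(utuple u n, 2), Or.inr ⟨rfl, le_rfl, hr2⟩⟩, ?_⟩
        rw [hFmk]
        exact fval_ne_one (by norm_num)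
      · have hb := inC_bounds hn (mem_Cset.mp hc)
        exact ⟨G.connectedComponentMk ⟨_, hvert c hb.1 hb.2⟩, (hFmk _).trans (hfval_C c hc)⟩
  have hzero : (0 : ℕ) ∉ Cset n u v := by
    intro h
    have := inC_bounds hn (mem_Cset.mp h)
    omega
  have hnC : n ∈ Cset n u v := mem_Cset.mpr (Or.inr rfl)
  -- the base vertex
  have hx1mem : ((atuple u n 1 (u 1 + 1), 1) : (ℕ → ℤ) × ℤ) ∈ PLr n u v r :=
    hvert 1 le_rfl hn
  refine ⟨?_, ?_, ?_⟩
  · constructor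
    · intro hconn
      have hpre := hconn.preconnected
      have hr1 : r = 1 := by
        by_contra hr1
        have hr2 : 2 ≤ r := by omega
        have hkey := key_inv' _ ((utuple u n, 2) : (ℕ → ℤ) × ℤ) hx1mem (Or.inr ⟨rfl, le_rfl, hr2⟩) (hpre _ _)
        rw [fval_pair le_rfl hn le_rfl rfl rfl, fval_ne_one (by norm_num)] at hkey
        have := (btop_spec (u := u) (v := v) hn).1
        omega
      refine ⟨hr1, ?_⟩
      have hCsub : Cset n u v = {n} := by
        apply Set.eq_singleton_iff_unique_mem.mpr
        refine ⟨hnC, fun q hq => ?_⟩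
        have hbq := inC_bounds hn (mem_Cset.mp hq)
        have hkey := key_inv' _ _ (hvert q hbq.1 hbq.2) (hvert n hn le_rfl) (hpre _ _)
        rw [hfval_C q hq, hfval_C n hnC] at hkey
        exact hkey
      rw [hCsub, Set.ncard_singleton]
    · rintro ⟨hr1, hcard⟩
      obtain ⟨a, ha⟩ := Set.ncard_eq_one.mp hcard
      have han : a = n := by
        have := ha ▸ hnC
        simpa using this.symm
      rw [han] at ha
      have hprecon : G.Preconnected := by
        intro x y
        apply key_reach
        have hx : fval n u v x.val ∈ Cset n u v := by
          rcases x.2 with ⟨h1, h2⟩ | ⟨_, h2, h3⟩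
          · exact hfval_mem x h1 h2
          · omega
        have hy : fval n u v y.val ∈ Cset n u v := by
          rcases y.2 with ⟨h1, h2⟩ | ⟨_, h2, h3⟩
          · exact hfval_mem y h1 h2
          · omega
        rw [ha] at hx hy
        simp only [Set.mem_singleton_iff] at hx hy
        rw [hx, hy]
      have : Nonempty ↥(PLr n u v r) := ⟨⟨_, hx1mem⟩⟩
      exact ⟨hprecon⟩
  · intro hr1
    exact hncards _ (hrange1 hr1)
  · intro hr2
    rw [hncards _ (hrange2 hr2), Set.ncard_insert_of_notMem hzero Cset_finite]

end LadderPaper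
end

section
/- Suppose i, g ∈ [n] and there exists q with i ≤ q < g and v_q < u_{q+1}. Then for every j ∈ [u_i+1, v_i] and every h ∈ [u_g+1, v_g], the elements a_{i,j} and a_{g,h} are incomparable in 𝓛 (neither a_{i,j} ≤ a_{g,h} nor a_{g,h} ≤ a_{i,j}). -/
namespace LadderPaper

lemma mono_gap (f : ℕ → ℤ) (n : ℕ)
    (hf : ∀ i, 1 ≤ i → i + 1 ≤ n → f i < f (i + 1))
    {a b : ℕ} (ha : 1 ≤ a) (hab : a ≤ b) (hb : b ≤ n) :
    f a + ((b : ℤ) - (a : ℤ)) ≤ f b := by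
  induction b, hab using Nat.le_induction with
  | base => simp
  | succ k hk ih =>
    have h1 : f k < f (k + 1) := hf k (le_trans ha hk) hb
    have h2 := ih (le_trans (Nat.le_succ k) hb)
    push_cast
    push_cast at h2
    omega

theorem stmt7
    (n m : ℕ) (u v : ℕ → ℤ)
    (hn : 1 ≤ n) (hnm : n < m)
    (hu1 : u 1 = 1)
    (humono : ∀ i, 1 ≤ i → i + 1 ≤ n → u i < u (i + 1))
    (hum : u n < (m : ℤ))
    (hv1 : 1 < v 1)
    (hvmono : ∀ i, 1 ≤ i → i + 1 ≤ n → v i < v (i + 1))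
    (hvn : v n = (m : ℤ))
    (huv : ∀ i, 1 ≤ i → i ≤ n → u i < v i)
    (hstep : ∀ i, 1 ≤ i → i + 1 ≤ n → u (i + 1) ≤ v i + 1)
    (i g : ℕ) (hi1 : 1 ≤ i) (hin : i ≤ n) (hg1 : 1 ≤ g) (hgn : g ≤ n)
    (hq : ∃ q, i ≤ q ∧ q < g ∧ v q < u (q + 1)) :
    ∀ j l : ℤ, u i + 1 ≤ j → j ≤ v i → u g + 1 ≤ l → l ≤ v g →
      ¬ atuple u n i j ≤ atuple u n g l ∧ ¬ atuple u n g l ≤ atuple u n i j := by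
  obtain ⟨q, hiq, hqg, hvq⟩ := hq
  intro j l hj1 hj2 hl1 hl2
  have hig : i < g := lt_of_le_of_lt hiq hqg
  have hqn : q ≤ n := le_trans (le_of_lt hqg) hgn
  have h2 : v i + ((q:ℤ) - (i:ℤ)) ≤ v q := mono_gap v n hvmono hi1 hiq hqn
  have h4 : u (q+1) + ((g:ℤ) - ((q:ℕ)+1 : ℕ)) ≤ u g :=
    mono_gap u n humono (by omega) (by omega) hgn
  have hjg : j + ((g:ℤ) - (i:ℤ)) ≤ u g := by push_cast at h4 ⊢; omega
  have hAi : atuple u n i j i = j := by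
    unfold atuple
    rw [if_pos ⟨hi1, hin⟩, if_neg (lt_irrefl i), sub_self, add_zero]
    exact max_eq_left (by omega)
  have hBi : atuple u n g l i = u i := by
    unfold atuple
    rw [if_pos ⟨hi1, hin⟩, if_pos hig]
  have hAg : atuple u n i j g = u g := by
    unfold atuple
    rw [if_pos ⟨hg1, hgn⟩, if_neg (not_lt.mpr (le_of_lt hig))]
    exact max_eq_right hjg
  have hBg : atuple u n g l g = l := by
    unfold atuple
    rw [if_pos ⟨hg1, hgn⟩, if_neg (lt_irrefl g), sub_self, add_zero]
    exact max_eq_left (by omega)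
  constructor
  · intro hle
    have h : atuple u n i j i ≤ atuple u n g l i := hle i
    rw [hAi, hBi] at h
    omega
  · intro hle
    have h : atuple u n g l g ≤ atuple u n i j g := hle g
    rw [hAg, hBg] at h
    omega

end LadderPaper
end

section
/- Suppose v_i ≥ u_{i+1} for all i ∈ [n−1]. If a_{i,u_i+1} and a_{k,u_k+1} are consecutive minima of P_𝓛, then there exists a maximal element x of P_𝓛 with a_{i,u_i+1} ≤ x and a_{k,u_k+1} ≤ x. Similarly, if a_{i,v_i} and a_{k,v_k} are consecutive maxima of P_𝓛, then there exists a minimal element y of P_𝓛 with y ≤ a_{i,v_i} and y ≤ a_{k,v_k}. -/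
namespace LadderPaper

section Aux
variable {n : ℕ} {u v : ℕ → ℤ}

lemma PL_finite (n : ℕ) (u v : ℕ → ℤ) : (PL n u v).Finite := by
  have hsub : PL n u v ⊆ ⋃ i ∈ Set.Icc 1 n, (atuple u n i) '' (Set.Icc (u i + 1) (v i)) := by
    rintro x ⟨i, j, h1, h2, h3, h4, rfl⟩
    exact Set.mem_biUnion ⟨h1, h2⟩ ⟨j, ⟨h3, h4⟩, rfl⟩
  exact Set.Finite.subset
    (Set.Finite.biUnion (Set.finite_Icc 1 n) fun i _ => (Set.finite_Icc _ _).image _) hsub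

lemma atuple_mono (u : ℕ → ℤ) (n i : ℕ) {j j' : ℤ} (h : j ≤ j') :
    atuple u n i j ≤ atuple u n i j' := by
  intro t
  unfold atuple
  split_ifs with h1 h2
  · exact le_refl _
  · exact max_le_max (by linarith) le_rfl
  · exact le_refl _

lemma exists_max_above {z : ℕ → ℤ} (hz : z ∈ PL n u v) :
    ∃ x : ↥(PL n u v), IsMax x ∧ z ≤ (x : ℕ → ℤ) := by
  obtain ⟨x, ⟨hxP, hzx⟩, hmax⟩ :=
    Set.Finite.exists_maximalFor id {w ∈ PL n u v | z ≤ w}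
      ((PL_finite n u v).subset (fun w hw => hw.1)) ⟨z, hz, le_rfl⟩
  refine ⟨⟨x, hxP⟩, ?_, hzx⟩
  rintro ⟨w, hw⟩ hle
  have : x = w := le_antisymm hle (hmax ⟨hw, le_trans hzx hle⟩ hle)
  exact le_of_eq (Subtype.ext this.symm)

lemma exists_min_below {z : ℕ → ℤ} (hz : z ∈ PL n u v) :
    ∃ y : ↥(PL n u v), IsMin y ∧ (y : ℕ → ℤ) ≤ z := by
  obtain ⟨x, ⟨hxP, hzx⟩, hmin⟩ :=
    Set.Finite.exists_minimalFor id {w ∈ PL n u v | w ≤ z}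
      ((PL_finite n u v).subset (fun w hw => hw.1)) ⟨z, hz, le_rfl⟩
  refine ⟨⟨x, hxP⟩, ?_, hzx⟩
  rintro ⟨w, hw⟩ hle
  have : x = w := le_antisymm (hmin ⟨hw, le_trans hle hzx⟩ hle) hle
  exact le_of_eq (Subtype.ext this)

lemma chain_u {i k : ℕ}
    (humono : ∀ t, 1 ≤ t → t + 1 ≤ n → u t < u (t + 1))
    (hi1 : 1 ≤ i) (hik : i < k) (hkn : k ≤ n)
    (hnot : ∀ t, i < t → t < k → ¬ epsGt1 u n t) :
    u k = u (i + 1) + ((k : ℤ) - (i : ℤ) - 1) := by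
  have key : ∀ d : ℕ, i + 1 + d ≤ k → u (i + 1 + d) = u (i + 1) + d := by
    intro d
    induction d with
    | zero => intro _; simp
    | succ d ih =>
      intro h
      have hd := ih (by omega)
      set t := i + 1 + d with ht
      have h1 : u t < u (t + 1) := humono t (by omega) (by omega)
      have h2 : ¬ epsGt1 u n t := hnot t (by omega) (by omega)
      rw [epsGt1] at h2
      push_neg at h2
      have heq : u (t + 1) = u t + 1 := by omega
      have : i + 1 + (d + 1) = t + 1 := by omega
      rw [this, heq, hd]
      push_cast; ring
  have hk : k = i + 1 + (k - (i + 1)) := by omega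
  rw [hk, key (k - (i + 1)) (by omega)]
  push_cast [show i + 1 ≤ k from by omega]
  ring_nf

lemma chain_v {i k : ℕ}
    (hvmono : ∀ t, 1 ≤ t → t + 1 ≤ n → v t < v (t + 1))
    (hi1 : 1 ≤ i) (hik : i < k) (hkn : k ≤ n)
    (hnot : ∀ t, i < t → t < k → ¬ thetaGt1 v t) :
    v (k - 1) = v i + ((k : ℤ) - (i : ℤ) - 1) := by
  have key : ∀ d : ℕ, i + d ≤ k - 1 → v (i + d) = v i + d := by
    intro d
    induction d with
    | zero => intro _; simp
    | succ d ih =>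
      intro h
      have hd := ih (by omega)
      set t := i + d with ht
      have h1 : v t < v (t + 1) := hvmono t (by omega) (by omega)
      have h2 : ¬ thetaGt1 v (t + 1) := hnot (t + 1) (by omega) (by omega)
      rw [thetaGt1] at h2
      push_neg at h2
      have h3 : v (t + 1) - v (t + 1 - 1) ≤ 1 := h2.2
      have h4 : t + 1 - 1 = t := by omega
      rw [h4] at h3
      have heq : v (t + 1) = v t + 1 := by omega
      have : i + (d + 1) = t + 1 := by omega
      rw [this, heq, hd]
      push_cast; ring
  have hk : k - 1 = i + (k - 1 - i) := by omega
  rw [hk, key (k - 1 - i) (by omega)]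
  have : ((k : ℤ)) - 1 - i = ((k - 1 - i : ℕ) : ℤ) := by
    push_cast [show i ≤ k - 1 from by omega, show 1 ≤ k from by omega]
    ring
  omega

lemma le1 {i k : ℕ} (hik : i < k)
    (huk : u k = u (i + 1) + ((k : ℤ) - (i : ℤ) - 1)) :
    atuple u n k (u k + 1) ≤ atuple u n i (u (i + 1)) := by
  intro t
  unfold atuple
  by_cases hb : 1 ≤ t ∧ t ≤ n
  · rw [if_pos hb, if_pos hb]
    rcases lt_or_ge t i with h1 | h1
    · rw [if_pos (show t < k by omega), if_pos h1]
    · rw [if_neg (show ¬ t < i by omega)]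
      rcases lt_or_ge t k with h2 | h2
      · rw [if_pos h2]
        exact le_max_right _ _
      · rw [if_neg (show ¬ t < k by omega)]
        have : u k + 1 + ((t : ℤ) - (k : ℤ)) = u (i + 1) + ((t : ℤ) - (i : ℤ)) := by
          rw [huk]; push_cast; ring
        rw [this]
  · rw [if_neg hb, if_neg hb]

lemma le2 {i k : ℕ} (hik : i < k)
    (hvk : v (k - 1) = v i + ((k : ℤ) - (i : ℤ) - 1)) :
    atuple u n k (v (k - 1) + 1) ≤ atuple u n i (v i) := by
  intro t
  unfold atuple
  by_cases hb : 1 ≤ t ∧ t ≤ n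
  · rw [if_pos hb, if_pos hb]
    rcases lt_or_ge t i with h1 | h1
    · rw [if_pos (show t < k by omega), if_pos h1]
    · rw [if_neg (show ¬ t < i by omega)]
      rcases lt_or_ge t k with h2 | h2
      · rw [if_pos h2]
        exact le_max_right _ _
      · rw [if_neg (show ¬ t < k by omega)]
        have : v (k - 1) + 1 + ((t : ℤ) - (k : ℤ)) = v i + ((t : ℤ) - (i : ℤ)) := by
          rw [hvk]; push_cast; ring
        rw [this]
  · rw [if_neg hb, if_neg hb]

end Aux

theorem stmt10
    (n m : ℕ) (u v : ℕ → ℤ)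
    (hn : 1 ≤ n) (hnm : n < m)
    (hu1 : u 1 = 1)
    (humono : ∀ i, 1 ≤ i → i + 1 ≤ n → u i < u (i + 1))
    (hum : u n < (m : ℤ))
    (hv1 : 1 < v 1)
    (hvmono : ∀ i, 1 ≤ i → i + 1 ≤ n → v i < v (i + 1))
    (hvn : v n = (m : ℤ))
    (huv : ∀ i, 1 ≤ i → i ≤ n → u i < v i)
    (hstep : ∀ i, 1 ≤ i → i + 1 ≤ n → u (i + 1) ≤ v i + 1)
    (hcn : ∀ i, 1 ≤ i → i + 1 ≤ n → u (i + 1) ≤ v i) :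
    (∀ i k : ℕ, 1 ≤ i → i < k → k ≤ n → epsGt1 u n i → epsGt1 u n k →
      (∀ t, i < t → t < k → ¬ epsGt1 u n t) →
      ∃ x : ↥(PL n u v), IsMax x ∧
        atuple u n i (u i + 1) ≤ (x : ℕ → ℤ) ∧ atuple u n k (u k + 1) ≤ (x : ℕ → ℤ)) ∧
    (∀ i k : ℕ, 1 ≤ i → i < k → k ≤ n → thetaGt1 v i → thetaGt1 v k →
      (∀ t, i < t → t < k → ¬ thetaGt1 v t) →
      ∃ y : ↥(PL n u v), IsMin y ∧
        (y : ℕ → ℤ) ≤ atuple u n i (v i) ∧ (y : ℕ → ℤ) ≤ atuple u n k (v k)) := by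
  constructor
  · intro i k hi1 hik hkn hei hek hcons
    have hin : i + 1 ≤ n := by omega
    have hj1 : u i + 1 ≤ u (i + 1) := by have := humono i hi1 hin; omega
    have hj2 : u (i + 1) ≤ v i := hcn i hi1 hin
    have hz : atuple u n i (u (i + 1)) ∈ PL n u v :=
      ⟨i, u (i + 1), hi1, by omega, hj1, hj2, rfl⟩
    obtain ⟨x, hxmax, hzx⟩ := exists_max_above hz
    refine ⟨x, hxmax, le_trans ?_ hzx, le_trans ?_ hzx⟩
    · exact atuple_mono u n i hj1
    · exact le1 hik (chain_u humono hi1 hik hkn hcons)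
  · intro i k hi1 hik hkn hti htk hcons
    have hk1n : (k - 1) + 1 ≤ n := by omega
    have h1k1 : 1 ≤ k - 1 := by omega
    have hcn' := hcn (k - 1) h1k1 hk1n
    have hvm := hvmono (k - 1) h1k1 hk1n
    rw [show k - 1 + 1 = k from by omega] at hcn' hvm
    have hj1 : u k + 1 ≤ v (k - 1) + 1 := by omega
    have hj2 : v (k - 1) + 1 ≤ v k := by omega
    have hz : atuple u n k (v (k - 1) + 1) ∈ PL n u v :=
      ⟨k, v (k - 1) + 1, by omega, hkn, hj1, hj2, rfl⟩
    obtain ⟨y, hymin, hyz⟩ := exists_min_below hz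
    refine ⟨y, hymin, le_trans hyz ?_, le_trans hyz ?_⟩
    · exact le2 hik (chain_v hvmono hi1 hik hkn hcons)
    · exact atuple_mono u n k hj2

end LadderPaper
end
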